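/- Denote Υₙ = ∏_{i=1}^n λᵢ and Υ_{n∖k} = ∏_{i≠k} λᵢ, and Φ the pole-distribution factor. Then (1 − Υₙ)·Φ_{λ₁⋯λₙ} = ∑_{k=1}^n (−1)^{1+k} Υ_{n∖k} Φ_{λ₁⋯λₙ∖λₖ}, as an identity of rational functions in λ₁,…,λₙ. -/

import Mathlib

open Finset Polynomial

lemma prod_Ioi_split {M : Type*} [CommMonoid M] {n : ℕ} (g : Fin (n+1) → Fin (n+1) → M)
    (k : Fin (n+1)) :
    ∏ j, ∏ m ∈ Finset.Ioi j, g j m =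
      ((∏ j ∈ Finset.Iio k, g j k) * ∏ m ∈ Finset.Ioi k, g k m) *
        ∏ j : Fin n, ∏ m ∈ Finset.Ioi j, g (k.succAbove j) (k.succAbove m) := by
  rw [Fin.prod_univ_succAbove (fun j => ∏ m ∈ Finset.Ioi j, g j m) k]
  rw [mul_comm (∏ j ∈ Finset.Iio k, g j k), mul_assoc]
  congr 1
  have key : ∀ j : Fin n, Finset.Ioi (k.succAbove j) \ {k} =
      (Finset.Ioi j).map k.succAboveEmb := by
    intro j
    ext m
    simp only [mem_sdiff, mem_Ioi, mem_singleton, mem_map, Fin.succAboveEmb_apply]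
    constructor
    · rintro ⟨hlt, hne⟩
      obtain ⟨m', rfl⟩ := Fin.exists_succAbove_eq hne
      exact ⟨m', by rwa [← Fin.succAbove_lt_succAbove_iff (p := k)], rfl⟩
    · rintro ⟨m', hm', rfl⟩
      exact ⟨Fin.succAbove_lt_succAbove_iff.mpr hm', k.succAbove_ne m'⟩
  have inner : ∀ j : Fin n, ∏ m ∈ Finset.Ioi (k.succAbove j), g (k.succAbove j) m =
      (if k.succAbove j < k then g (k.succAbove j) k else 1) *
        ∏ m ∈ Finset.Ioi j, g (k.succAbove j) (k.succAbove m) := by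
    intro j
    have hmap : ∏ m ∈ Finset.Ioi j, g (k.succAbove j) (k.succAbove m) =
        ∏ m ∈ (Finset.Ioi j).map k.succAboveEmb, g (k.succAbove j) m := by
      rw [Finset.prod_map]; rfl
    rw [hmap, ← key j]
    by_cases h : k.succAbove j < k
    · rw [if_pos h, ← Finset.prod_eq_mul_prod_sdiff_singleton_of_mem (Finset.mem_Ioi.mpr h) (g (k.succAbove j))]
    · rw [if_neg h, one_mul]
      congr 1
      rw [eq_comm, Finset.sdiff_eq_self_iff_disjoint, Finset.disjoint_singleton_right]
      intro hk
      exact h (Finset.mem_Ioi.mp hk)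
  simp_rw [inner]
  rw [Finset.prod_mul_distrib]
  congr 1
  rw [← Finset.prod_filter]
  refine Finset.prod_bij (fun j _ => k.succAbove j) ?_ ?_ ?_ ?_
  · intro j hj
    simp only [Finset.mem_filter] at hj
    exact Finset.mem_Iio.mpr hj.2
  · intro a _ b _ h
    exact Fin.succAbove_right_injective h
  · intro m hm
    have hne : m ≠ k := Fin.ne_of_lt (Finset.mem_Iio.mp hm)
    obtain ⟨j, rfl⟩ := Fin.exists_succAbove_eq hne
    exact ⟨j, Finset.mem_filter.mpr ⟨Finset.mem_univ _, Finset.mem_Iio.mp hm⟩, rfl⟩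
  · intro j _
    rfl


lemma prod_erase_univ {M : Type*} [CommMonoid M] {n : ℕ} (f : Fin (n+1) → M) (i : Fin (n+1)) :
    ∏ j ∈ Finset.univ.erase i, f j = ∏ j : Fin n, f (i.succAbove j) := by
  have h : Finset.univ.erase i = Finset.univ.map i.succAboveEmb := by
    ext m
    simp only [Finset.mem_erase, Finset.mem_univ, and_true, Finset.mem_map,
      Fin.succAboveEmb_apply, Finset.mem_univ, true_and]
    constructor
    · intro h
      obtain ⟨z, hz⟩ := Fin.exists_succAbove_eq h
      exact ⟨z, hz⟩
    · rintro ⟨z, rfl⟩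
      exact Fin.succAbove_ne i z
  rw [h, Finset.prod_map]
  rfl

lemma erase_univ_eq_Iio_union_Ioi {n : ℕ} (k : Fin (n+1)) :
    Finset.univ.erase k = Finset.Iio k ∪ Finset.Ioi k := by
  ext m
  simp only [Finset.mem_erase, Finset.mem_univ, and_true, Finset.mem_union, Finset.mem_Iio,
    Finset.mem_Ioi]
  exact ne_iff_lt_or_gt

lemma prod_neg' {K : Type*} [CommRing K] {n : ℕ} (s : Finset (Fin n)) (f : Fin n → K) :
    ∏ j ∈ s, -f j = (-1) ^ s.card * ∏ j ∈ s, f j := by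
  rw [← Finset.prod_const, ← Finset.prod_mul_distrib]
  simp

lemma cons_prod_node_zero {K : Type*} [CommRing K] {m : ℕ} (a : K) (w : Fin (m+1) → K) :
    (∏ j : Fin (m+1),
      ((Fin.cons a w : Fin (m+2) → K) 0 - (Fin.cons a w : Fin (m+2) → K) ((0 : Fin (m+2)).succAbove j)))
      = ∏ j : Fin (m+1), (a - w j) := by
  simp

lemma cons_prod_node_succ {K : Type*} [CommRing K] {m : ℕ} (a : K) (w : Fin (m+1) → K)
    (i : Fin (m+1)) :
    (∏ j : Fin (m+1),
      ((Fin.cons a w : Fin (m+2) → K) i.succ - (Fin.cons a w : Fin (m+2) → K) (i.succ.succAbove j)))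
      = (w i - a) * ∏ j : Fin m, (w i - w (i.succAbove j)) := by
  rw [Fin.prod_univ_succ]
  simp [Fin.succ_succAbove_succ]

lemma basis_leadingCoeff {F ι : Type*} [Field F] [DecidableEq ι] {s : Finset ι} {v : ι → F}
    {i : ι} :
    (Lagrange.basis s v i).leadingCoeff = (∏ j ∈ s.erase i, (v i - v j))⁻¹ := by
  rw [Lagrange.basis, leadingCoeff_prod, ← prod_inv_distrib]
  refine Finset.prod_congr rfl fun j _ => ?_
  by_cases h : v i = v j
  · simp [h, Lagrange.basisDivisor_self]
  · rw [Lagrange.basisDivisor, leadingCoeff_mul, leadingCoeff_C,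
      (monic_X_sub_C (v j)).leadingCoeff, mul_one]

lemma lagrange_sum_zero {F ι : Type*} [Field F] [DecidableEq ι] (s : Finset ι) (v : ι → F)
    (hvs : Set.InjOn v s) (C : Polynomial F) (hC : C.degree < ((#s - 1 : ℕ) : WithBot ℕ)) :
    ∑ i ∈ s, C.eval (v i) * (∏ j ∈ s.erase i, (v i - v j))⁻¹ = 0 := by
  have hC' : C.degree < (#s : WithBot ℕ) := lt_of_lt_of_le hC (by exact_mod_cast Nat.sub_le _ _)
  have h := Lagrange.eq_interpolate hvs hC'
  have h2 := congrArg (fun p => Polynomial.coeff p (#s - 1)) h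
  simp only [Lagrange.interpolate_apply, Polynomial.finset_sum_coeff, Polynomial.coeff_C_mul] at h2
  rw [coeff_eq_zero_of_degree_lt hC] at h2
  refine Eq.trans (Finset.sum_congr rfl fun i hi => ?_) h2.symm
  congr 1
  rw [← Lagrange.natDegree_basis hvs hi, Polynomial.coeff_natDegree, basis_leadingCoeff]

lemma key_sum {K : Type*} [Field K] {n : ℕ} (x : Fin (n + 1) → K)
    (hinj : Function.Injective x) (h0 : ∀ i, x i ≠ 0) (hm1 : ∀ i, x i ≠ -1) :
    ∑ k : Fin (n + 1), (1 - x k) *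
        (∏ j : Fin n, (x (k.succAbove j) - (x (k.succAbove j))^2 * x k)) *
        (∏ j : Fin n, (x k - x (k.succAbove j)))⁻¹
      = (-1 : K) ^ n * (1 - ∏ i, x i) := by
  classical
  set w : Fin (n+2) → K := Fin.cons (-1) x with hw_def
  set v : Fin (n+3) → K := Fin.cons 0 w with hv_def
  have hw : Function.Injective w := by
    apply Fin.cons_injective_of_injective _ hinj
    rintro ⟨i, hi⟩
    exact hm1 i hi
  have hv : Function.Injective v := by
    apply Fin.cons_injective_of_injective _ hw
    rintro ⟨i, hi⟩
    induction i using Fin.cases with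
    | zero => simp [hw_def] at hi
    | succ i => simp [hw_def] at hi; exact h0 i hi
  set Cp : Polynomial K := ∏ i : Fin (n+1), (Polynomial.C (x i) - Polynomial.C ((x i)^2) * Polynomial.X) with hCp_def
  have hdeg : Cp.degree < ((n + 2 : ℕ) : WithBot ℕ) := by
    have h1 : Cp.natDegree ≤ n + 1 := by
      refine le_trans (Polynomial.natDegree_prod_le _ _) ?_
      have : ∀ i : Fin (n+1),
          (Polynomial.C (x i) - Polynomial.C ((x i)^2) * Polynomial.X).natDegree ≤ 1 := by
        intro i
        refine le_trans (Polynomial.natDegree_sub_le _ _) ?_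
        simp only [Polynomial.natDegree_C, max_le_iff]
        refine ⟨Nat.zero_le _, le_trans (Polynomial.natDegree_mul_le) ?_⟩
        simp
      refine le_trans (Finset.sum_le_sum (g := fun _ => 1) fun i _ => this i) ?_
      simp
    calc Cp.degree ≤ (Cp.natDegree : WithBot ℕ) := Polynomial.degree_le_natDegree
      _ ≤ ((n + 1 : ℕ) : WithBot ℕ) := by exact_mod_cast h1
      _ < ((n + 2 : ℕ) : WithBot ℕ) := by exact_mod_cast Nat.lt_succ_self _
  have hsum := lagrange_sum_zero Finset.univ v hv.injOn Cp
    (by simpa using hdeg)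
  have hP : (∏ i, x i) ≠ 0 := Finset.prod_ne_zero_iff.mpr fun i _ => h0 i
  have h1x : ∀ i, (1 : K) + x i ≠ 0 := by
    intro i h
    exact hm1 i (by linear_combination h)
  have H1x : (∏ i, ((1:K) + x i)) ≠ 0 := Finset.prod_ne_zero_iff.mpr fun i _ => h1x i
  have hinvpow : ∀ m : ℕ, ((-1:K)^m)⁻¹ = (-1:K)^m := fun m => by
    rw [← inv_pow, inv_neg, inv_one]
  have heval : ∀ t : K, Cp.eval t = ∏ i, (x i - (x i)^2 * t) := by
    intro t
    rw [hCp_def, Polynomial.eval_prod]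
    simp
  rw [Fin.sum_univ_succ, Fin.sum_univ_succ] at hsum
  -- node 0
  have hv0 : v 0 = 0 := by simp [hv_def]
  have hE0 : ∏ j ∈ Finset.univ.erase (0 : Fin (n+3)), (v 0 - v j)
      = (-1:K)^(n+1) * ∏ i, x i := by
    rw [prod_erase_univ (fun j => v 0 - v j) 0]
    simp only [hv_def]
    rw [cons_prod_node_zero 0 w]
    rw [Fin.prod_univ_succ]
    simp only [hw_def, Fin.cons_zero, Fin.cons_succ, zero_sub, sub_neg_eq_add, zero_add,
      neg_neg]
    rw [prod_neg' Finset.univ x]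
    simp
  have e0 : Cp.eval (v 0) * (∏ j ∈ Finset.univ.erase (0 : Fin (n+3)), (v 0 - v j))⁻¹
      = (-1:K)^(n+1) := by
    rw [hE0, hv0, heval]
    simp only [mul_zero, sub_zero]
    rw [mul_inv, hinvpow, mul_comm ((-1:K)^(n+1)) _, ← mul_assoc, mul_inv_cancel₀ hP, one_mul]
  -- node 1
  have hv1 : v (Fin.succ (0 : Fin (n+2))) = -1 := by simp [hv_def, hw_def]
  have hE1 : ∏ j ∈ Finset.univ.erase (Fin.succ (0 : Fin (n+2))), (v (Fin.succ 0) - v j)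
      = (-1:K)^(n+2) * ∏ i, ((1:K) + x i) := by
    rw [prod_erase_univ (fun j => v (Fin.succ (0 : Fin (n+2))) - v j)]
    simp only [hv_def]
    rw [cons_prod_node_succ 0 w 0]
    simp only [hw_def, Fin.cons_zero, Fin.succAbove_zero, Fin.cons_succ, sub_zero]
    simp_rw [show ∀ j : Fin (n+1), (-1:K) - x j = -((1:K) + x j) from fun j => by ring]
    rw [prod_neg' Finset.univ (fun j => (1:K) + x j)]
    simp only [Finset.card_univ, Fintype.card_fin]
    rw [pow_succ]
    ring
  have e1 : Cp.eval (v (Fin.succ (0 : Fin (n+2)))) *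
      (∏ j ∈ Finset.univ.erase (Fin.succ (0 : Fin (n+2))), (v (Fin.succ 0) - v j))⁻¹
      = (-1:K)^n * ∏ i, x i := by
    rw [hE1, hv1, heval]
    have : (∏ i, (x i - (x i)^2 * (-1))) = (∏ i, x i) * ∏ i, ((1:K) + x i) := by
      rw [← Finset.prod_mul_distrib]
      exact Finset.prod_congr rfl fun i _ => by ring
    rw [this, mul_inv, hinvpow, show (-1:K)^(n+2) = (-1:K)^n by rw [pow_succ, pow_succ]; ring]
    field_simp
  -- nodes k
  have ek : ∀ k : Fin (n+1),
      Cp.eval (v (Fin.succ (Fin.succ k))) *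
        (∏ j ∈ Finset.univ.erase (Fin.succ (Fin.succ k)),
          (v (Fin.succ (Fin.succ k)) - v j))⁻¹
      = (1 - x k) * (∏ j : Fin n, (x (k.succAbove j) - (x (k.succAbove j))^2 * x k)) *
          (∏ j : Fin n, (x k - x (k.succAbove j)))⁻¹ := by
    intro k
    have hvk : v (Fin.succ (Fin.succ k)) = x k := by simp [hv_def, hw_def]
    have hQk : (∏ j : Fin n, (x k - x (k.succAbove j))) ≠ 0 :=
      Finset.prod_ne_zero_iff.mpr fun j _ =>
        sub_ne_zero.mpr (hinj.ne (Fin.succAbove_ne k j).symm)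
    have hEk : (∏ j ∈ Finset.univ.erase (Fin.succ (Fin.succ k)),
        (v (Fin.succ (Fin.succ k)) - v j))
        = x k * ((x k + 1) * ∏ j : Fin n, (x k - x (k.succAbove j))) := by
      rw [prod_erase_univ (fun j => v (Fin.succ (Fin.succ k)) - v j)]
      simp only [hv_def]
      rw [cons_prod_node_succ 0 w (Fin.succ k)]
      simp only [hw_def]
      rw [cons_prod_node_succ (-1) x k]
      rw [Fin.cons_succ]
      ring_nf
    have hCpk : Cp.eval (x k)
        = (x k - (x k)^2 * x k) *
          ∏ j : Fin n, (x (k.succAbove j) - (x (k.succAbove j))^2 * x k) := by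
      rw [heval]
      exact Fin.prod_univ_succAbove (fun i => x i - (x i)^2 * x k) k
    rw [hEk, hvk, hCpk]
    have hxk := h0 k
    have hxk1 : x k + 1 ≠ 0 := fun h => h1x k (by linear_combination h)
    field_simp
    ring
  rw [e0, e1] at hsum
  simp only [ek] at hsum
  linear_combination hsum

lemma star_identity {K : Type*} [Field K] {n : ℕ} (x : Fin (n + 1) → K)
    (hinj : Function.Injective x) (h0 : ∀ i, x i ≠ 0) (hm1 : ∀ i, x i ≠ -1) :
    (1 - ∏ i, x i) * (∏ j, ∏ m ∈ Finset.Ioi j, (x m - x j)) =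
      ∑ k : Fin (n + 1), (-1 : K) ^ (k : ℕ) * (1 - x k) *
        (∏ i ∈ Finset.univ.erase k, x i) * (∏ j ∈ Finset.univ.erase k, (1 - x j * x k)) *
        ∏ j : Fin n, ∏ m ∈ Finset.Ioi j, (x (k.succAbove m) - x (k.succAbove j)) := by
  have hks := key_sum x hinj h0 hm1
  have hinvpow : ∀ m : ℕ, ((-1:K)^m)⁻¹ = (-1:K)^m := fun m => by
    rw [← inv_pow, inv_neg, inv_one]
  rw [eq_comm]
  have hterm : ∀ k : Fin (n+1),
      (-1 : K) ^ (k : ℕ) * (1 - x k) * (∏ i ∈ Finset.univ.erase k, x i) *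
        (∏ j ∈ Finset.univ.erase k, (1 - x j * x k)) *
        ∏ j : Fin n, ∏ m ∈ Finset.Ioi j, (x (k.succAbove m) - x (k.succAbove j))
      = (-1:K)^n * (∏ j, ∏ m ∈ Finset.Ioi j, (x m - x j)) *
          ((1 - x k) * (∏ j : Fin n, (x (k.succAbove j) - (x (k.succAbove j))^2 * x k)) *
            (∏ j : Fin n, (x k - x (k.succAbove j)))⁻¹) := by
    intro k
    have hkle : (k : ℕ) ≤ n := Fin.is_le k
    have ha : (∏ i ∈ Finset.univ.erase k, x i) = ∏ j : Fin n, x (k.succAbove j) :=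
      prod_erase_univ x k
    have hb : (∏ j ∈ Finset.univ.erase k, (1 - x j * x k))
        = ∏ j : Fin n, (1 - x (k.succAbove j) * x k) :=
      prod_erase_univ (fun j => 1 - x j * x k) k
    have hc : (∏ j : Fin n, x (k.succAbove j)) * (∏ j : Fin n, (1 - x (k.succAbove j) * x k))
        = ∏ j : Fin n, (x (k.succAbove j) - (x (k.succAbove j))^2 * x k) := by
      rw [← Finset.prod_mul_distrib]
      exact Finset.prod_congr rfl fun j _ => by ring
    have hd : (∏ j, ∏ m ∈ Finset.Ioi j, (x m - x j)) =
        ((∏ j ∈ Finset.Iio k, (x k - x j)) * ∏ m ∈ Finset.Ioi k, (x m - x k)) *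
          ∏ j : Fin n, ∏ m ∈ Finset.Ioi j, (x (k.succAbove m) - x (k.succAbove j)) :=
      prod_Ioi_split (fun j m => x m - x j) k
    have hcard : (Finset.Ioi k).card = n - (k : ℕ) := by
      rw [Fin.card_Ioi]
      omega
    have hIoi : (∏ m ∈ Finset.Ioi k, (x k - x m))
        = (-1:K)^(n - (k:ℕ)) * ∏ m ∈ Finset.Ioi k, (x m - x k) := by
      rw [show (∏ m ∈ Finset.Ioi k, (x k - x m)) = ∏ m ∈ Finset.Ioi k, -(x m - x k) from
        Finset.prod_congr rfl fun m _ => by ring]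
      rw [prod_neg', hcard]
    have he : (∏ j : Fin n, (x k - x (k.succAbove j)))
        = (-1:K)^(n-(k:ℕ)) *
          ((∏ j ∈ Finset.Iio k, (x k - x j)) * ∏ m ∈ Finset.Ioi k, (x m - x k)) := by
      rw [← prod_erase_univ (fun j => x k - x j) k, erase_univ_eq_Iio_union_Ioi,
        Finset.prod_union (by
          rw [Finset.disjoint_left]
          intro a ha ha'
          exact absurd (Finset.mem_Ioi.mp ha') (not_lt_of_gt (Finset.mem_Iio.mp ha))), hIoi]
      ring
    have hF : ((∏ j ∈ Finset.Iio k, (x k - x j)) * ∏ m ∈ Finset.Ioi k, (x m - x k)) ≠ 0 := by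
      apply mul_ne_zero
      · exact Finset.prod_ne_zero_iff.mpr fun j hj =>
          sub_ne_zero.mpr (hinj.ne (ne_of_gt (Finset.mem_Iio.mp hj)))
      · exact Finset.prod_ne_zero_iff.mpr fun m hm =>
          sub_ne_zero.mpr (hinj.ne (ne_of_gt (Finset.mem_Ioi.mp hm)))
    have hsq : (-1:K)^(n-(k:ℕ)) * (-1:K)^(n-(k:ℕ)) = 1 := by
      rw [← pow_add]
      exact Even.neg_one_pow ⟨n - (k:ℕ), rfl⟩
    have hrq : (-1:K)^n * (-1:K)^(n-(k:ℕ)) = (-1:K)^(k:ℕ) := by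
      have hnk : (-1:K)^(k:ℕ) * (-1:K)^(n-(k:ℕ)) = (-1:K)^n := by
        rw [← pow_add]
        congr 1
        omega
      rw [← hnk, mul_assoc, hsq, mul_one]
    rw [ha, hb, hd, he, mul_inv, hinvpow]
    linear_combination
      ((∏ j : Fin n, ∏ m ∈ Finset.Ioi j, (x (k.succAbove m) - x (k.succAbove j))) *
        (1 - x k) * (-1:K)^(k:ℕ)) * hc -
      ((∏ j : Fin n, ∏ m ∈ Finset.Ioi j, (x (k.succAbove m) - x (k.succAbove j))) *
        (1 - x k) *
        (∏ j : Fin n, (x (k.succAbove j) - (x (k.succAbove j))^2 * x k))) * hrq -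
      ((∏ j : Fin n, ∏ m ∈ Finset.Ioi j, (x (k.succAbove m) - x (k.succAbove j))) *
        (1 - x k) *
        (∏ j : Fin n, (x (k.succAbove j) - (x (k.succAbove j))^2 * x k)) *
        (-1:K)^n * (-1:K)^(n-(k:ℕ))) * mul_inv_cancel₀ hF
  rw [Finset.sum_congr rfl fun k _ => hterm k, ← Finset.mul_sum, hks]
  have hsq : ((-1:K)^n) * ((-1:K)^n) = 1 := by
    rw [← pow_add]
    exact Even.neg_one_pow ⟨n, rfl⟩
  linear_combination ((∏ j, ∏ m ∈ Finset.Ioi j, (x m - x j)) * (1 - ∏ i, x i)) * hsq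

lemma star_real {n : ℕ} (l : Fin (n + 1) → ℝ) :
    (1 - ∏ i, l i) * (∏ j, ∏ m ∈ Finset.Ioi j, (l m - l j)) =
      ∑ k : Fin (n + 1), (-1 : ℝ) ^ (k : ℕ) * (1 - l k) *
        (∏ i ∈ Finset.univ.erase k, l i) * (∏ j ∈ Finset.univ.erase k, (1 - l j * l k)) *
        ∏ j : Fin n, ∏ m ∈ Finset.Ioi j, (l (k.succAbove m) - l (k.succAbove j)) := by
  classical
  set R := MvPolynomial (Fin (n+1)) ℝ with hR_def
  let K := FractionRing R
  let φ : R →+* K := algebraMap R K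
  have hφ : Function.Injective φ := IsFractionRing.injective R K
  have hXinj : Function.Injective (fun i : Fin (n+1) => φ (MvPolynomial.X i)) :=
    hφ.comp (MvPolynomial.X_injective)
  have h0 : ∀ i : Fin (n+1), φ (MvPolynomial.X i) ≠ 0 := by
    intro i h
    exact MvPolynomial.X_ne_zero i (hφ (by simpa using h))
  have hm1 : ∀ i : Fin (n+1), φ (MvPolynomial.X i) ≠ -1 := by
    intro i h
    have : (MvPolynomial.X i : R) = MvPolynomial.C (-1 : ℝ) := by
      apply hφ
      rw [h]
      simp [map_neg, map_one]
    have h2 := congrArg (MvPolynomial.coeff (Finsupp.single i 1)) this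
    rw [MvPolynomial.coeff_X, MvPolynomial.coeff_C,
      if_neg (by simp [eq_comm, Finsupp.single_eq_zero] : ¬(0 : Fin (n+1) →₀ ℕ) = Finsupp.single i 1)] at h2
    norm_num at h2
  have hstar := star_identity (fun i : Fin (n+1) => φ (MvPolynomial.X i)) hXinj h0 hm1
  have hRlevel : (1 - ∏ i, (MvPolynomial.X i : R)) *
        (∏ j, ∏ m ∈ Finset.Ioi j, (MvPolynomial.X m - MvPolynomial.X j : R)) =
      ∑ k : Fin (n + 1), (-1 : R) ^ (k : ℕ) * (1 - MvPolynomial.X k) *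
        (∏ i ∈ Finset.univ.erase k, MvPolynomial.X i) *
        (∏ j ∈ Finset.univ.erase k, (1 - MvPolynomial.X j * MvPolynomial.X k)) *
        ∏ j : Fin n, ∏ m ∈ Finset.Ioi j,
          (MvPolynomial.X (k.succAbove m) - MvPolynomial.X (k.succAbove j) : R) := by
    apply hφ
    simpa only [map_mul, map_sub, map_one, map_sum, map_prod, map_pow, map_neg] using hstar
  have hev := congrArg (MvPolynomial.eval l) hRlevel
  simpa only [map_mul, map_sub, map_one, map_sum, map_prod, map_pow, map_neg,
    MvPolynomial.eval_X] using hev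


/-- The pole-distribution factor `Φ` of a tuple of reals. -/
noncomputable def Phi (m : ℕ) (l : Fin m → ℝ) : ℝ :=
  (∏ j : Fin m, ∏ k ∈ Finset.Ioi j, (l k - l j) / (1 - l j * l k)) *
    ∏ i : Fin m, (1 - l i)⁻¹

lemma Phi_eq (m : ℕ) (y : Fin m → ℝ) :
    Phi m y = (∏ j, ∏ k ∈ Finset.Ioi j, (y k - y j)) *
      (∏ j, ∏ k ∈ Finset.Ioi j, (1 - y j * y k))⁻¹ * (∏ i, (1 - y i))⁻¹ := by
  rw [Phi]
  simp_rw [div_eq_mul_inv, Finset.prod_mul_distrib, ← Finset.prod_inv_distrib]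

/-- Lemma 2: `(1 - Υₙ)·Φ_{λ₁⋯λₙ} = ∑ₖ (-1)^{1+k} Υ_{n∖k} Φ_{λ₁⋯λₙ∖λₖ}`,
with `k` ranging over 1-based positions (so the 0-based index `k` gets the
sign `(-1)^{1+(k+1)}`). -/
theorem one_sub_prod_mul_Phi_eq_sum (n : ℕ) (l : Fin (n + 1) → ℝ)
    (h1 : ∀ i, l i ≠ 1) (h2 : ∀ i j, i ≠ j → l i * l j ≠ 1) :
    (1 - ∏ i, l i) * Phi (n + 1) l =
      ∑ k : Fin (n + 1), (-1 : ℝ) ^ (1 + ((k : ℕ) + 1)) *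
        (∏ i ∈ Finset.univ.erase k, l i) * Phi n (l ∘ k.succAbove) := by
  have hstar := star_real l
  have hA1 : ∀ i, (1 : ℝ) - l i ≠ 0 := fun i => sub_ne_zero.mpr fun h => h1 i h.symm
  have hB1 : ∀ i j : Fin (n+1), i ≠ j → (1:ℝ) - l i * l j ≠ 0 := fun i j hij =>
    sub_ne_zero.mpr fun h => h2 i j hij h.symm
  have hsgn : ∀ k : Fin (n+1), (-1:ℝ)^(1+((k:ℕ)+1)) = (-1:ℝ)^(k:ℕ) := by
    intro k
    rw [show 1+((k:ℕ)+1) = (k:ℕ)+2 by omega, pow_add]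
    norm_num
  have hAne : (∏ i, ((1:ℝ) - l i)) ≠ 0 := Finset.prod_ne_zero_iff.mpr fun i _ => hA1 i
  have hBne : (∏ j, ∏ m ∈ Finset.Ioi j, ((1:ℝ) - l j * l m)) ≠ 0 :=
    Finset.prod_ne_zero_iff.mpr fun j _ => Finset.prod_ne_zero_iff.mpr fun m hm =>
      hB1 j m (ne_of_lt (Finset.mem_Ioi.mp hm))
  calc (1 - ∏ i, l i) * Phi (n + 1) l
      = ((1 - ∏ i, l i) * (∏ j, ∏ m ∈ Finset.Ioi j, (l m - l j))) *
          (∏ j, ∏ m ∈ Finset.Ioi j, ((1:ℝ) - l j * l m))⁻¹ * (∏ i, ((1:ℝ) - l i))⁻¹ := by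
        rw [Phi_eq]
        ring
    _ = (∑ k : Fin (n + 1), (-1 : ℝ) ^ (k : ℕ) * (1 - l k) *
          (∏ i ∈ Finset.univ.erase k, l i) *
          (∏ j ∈ Finset.univ.erase k, (1 - l j * l k)) *
          ∏ j : Fin n, ∏ m ∈ Finset.Ioi j, (l (k.succAbove m) - l (k.succAbove j))) *
          (∏ j, ∏ m ∈ Finset.Ioi j, ((1:ℝ) - l j * l m))⁻¹ * (∏ i, ((1:ℝ) - l i))⁻¹ := by
        rw [hstar]
    _ = ∑ k : Fin (n + 1), (-1 : ℝ) ^ (k : ℕ) * (1 - l k) *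
          (∏ i ∈ Finset.univ.erase k, l i) *
          (∏ j ∈ Finset.univ.erase k, (1 - l j * l k)) *
          (∏ j : Fin n, ∏ m ∈ Finset.Ioi j, (l (k.succAbove m) - l (k.succAbove j))) *
          (∏ j, ∏ m ∈ Finset.Ioi j, ((1:ℝ) - l j * l m))⁻¹ * (∏ i, ((1:ℝ) - l i))⁻¹ := by
        rw [Finset.sum_mul, Finset.sum_mul]
    _ = ∑ k : Fin (n + 1), (-1 : ℝ) ^ (1 + ((k : ℕ) + 1)) *
          (∏ i ∈ Finset.univ.erase k, l i) * Phi n (l ∘ k.succAbove) := by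
        refine Finset.sum_congr rfl fun k _ => ?_
        rw [hsgn k, Phi_eq]
        simp only [Function.comp_apply]
        have hArel : (∏ i, ((1:ℝ) - l i)) =
            (1 - l k) * ∏ j : Fin n, ((1:ℝ) - l (k.succAbove j)) :=
          Fin.prod_univ_succAbove (fun i => (1:ℝ) - l i) k
        have hBrel : (∏ j, ∏ m ∈ Finset.Ioi j, ((1:ℝ) - l j * l m)) =
            (∏ j ∈ Finset.univ.erase k, ((1:ℝ) - l j * l k)) *
              ∏ j : Fin n, ∏ m ∈ Finset.Ioi j,
                ((1:ℝ) - l (k.succAbove j) * l (k.succAbove m)) := by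
          rw [prod_Ioi_split (fun j m => (1:ℝ) - l j * l m) k]
          congr 1
          rw [erase_univ_eq_Iio_union_Ioi, Finset.prod_union (by
            rw [Finset.disjoint_left]
            intro a ha ha'
            exact absurd (Finset.mem_Ioi.mp ha') (not_lt_of_gt (Finset.mem_Iio.mp ha)))]
          congr 1
          exact Finset.prod_congr rfl fun m _ => by ring
        have hAk : (∏ j : Fin n, ((1:ℝ) - l (k.succAbove j))) ≠ 0 :=
          Finset.prod_ne_zero_iff.mpr fun j _ => hA1 _
        have hBk : (∏ j : Fin n, ∏ m ∈ Finset.Ioi j,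
            ((1:ℝ) - l (k.succAbove j) * l (k.succAbove m))) ≠ 0 :=
          Finset.prod_ne_zero_iff.mpr fun j _ => Finset.prod_ne_zero_iff.mpr fun m hm =>
            hB1 _ _ (Fin.succAbove_right_injective.ne (ne_of_lt (Finset.mem_Ioi.mp hm)))
        have hEk : (∏ j ∈ Finset.univ.erase k, ((1:ℝ) - l j * l k)) ≠ 0 :=
          Finset.prod_ne_zero_iff.mpr fun j hj => hB1 _ _ (Finset.mem_erase.mp hj).1
        rw [hArel, hBrel]
        field_simp [hA1 k, hAk, hBk, hEk]
        have hEk' : (∏ x ∈ Finset.univ.erase k, ((1:ℝ) - l k * l x)) ≠ 0 :=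
          Finset.prod_ne_zero_iff.mpr fun j hj => by
            rw [mul_comm]; exact hB1 _ _ (Finset.mem_erase.mp hj).1
        linear_combination ((∏ i ∈ Finset.univ.erase k, l i) *
          ∏ x : Fin n, ∏ m ∈ Finset.Ioi x, (l (k.succAbove m) - l (k.succAbove x))) *
          mul_inv_cancel₀ hEk'
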